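/- The generating series B(x,t) = Σ_T x^{|T|} t^{hook(T)}, summed over all binary trees T (the empty tree contributing 1), satisfies the functional equation B = 1 + x·t·(1/(1 − x·B))^2 in the ring of formal power series ℚ[[x,t]]. -/

import Mathlib

/-- Binary trees: `leaf` is the empty tree, `node l r` is a vertex with
left subtree `l` and right subtree `r`. -/
inductive BT : Type
  | leaf : BT
  | node : BT → BT → BT
  deriving DecidableEq

/-- Number of vertices of a binary tree. -/
def BT.size : BT → ℕ
  | leaf => 0
  | node l r => 1 + l.size + r.size

mutual
  /-- The number of hooks in the hook partition of a binary tree: one hook for the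
  root, plus the hooks of the trees hanging off the root's hook. -/
  def hookCount : BT → ℕ
    | .leaf => 0
    | .node l r => 1 + hookAuxL l + hookAuxR r
  /-- Total number of hooks of the right subtrees hanging off the leftmost branch. -/
  def hookAuxL : BT → ℕ
    | .leaf => 0
    | .node l r => hookCount r + hookAuxL l
  /-- Total number of hooks of the left subtrees hanging off the rightmost branch. -/
  def hookAuxR : BT → ℕ
    | .leaf => 0
    | .node l r => hookCount l + hookAuxR r
end

/-- The generating series `B(x,t) = ∑_T x^{|T|} t^{hook(T)}` over all binary trees,
in `ℚ[[x,t]]` with `x = X 0` and `t = X 1`: the coefficient of `xⁿ tᵏ` is the number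
of binary trees with `n` vertices and hook number `k` (the empty tree contributing 1). -/
noncomputable def Bser : MvPowerSeries (Fin 2) ℚ := fun d =>
  (Nat.card {T : BT // T.size = d 0 ∧ hookCount T = d 1} : ℚ)

namespace BTAux

open MvPowerSeries Finsupp

/-! ### Encoding and finiteness -/

/-- Prefix-free encoding of binary trees. -/
def enc : BT → List Bool
  | .leaf => [false]
  | .node l r => true :: (enc l ++ enc r)

lemma enc_cancel : ∀ (t₁ t₂ : BT) (s₁ s₂ : List Bool),
    enc t₁ ++ s₁ = enc t₂ ++ s₂ → t₁ = t₂ ∧ s₁ = s₂ := by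
  intro t₁
  induction t₁ with
  | leaf =>
    intro t₂ s₁ s₂ h
    cases t₂ with
    | leaf => simpa [enc] using h
    | node l r => simp [enc] at h
  | node l r ihl ihr =>
    intro t₂ s₁ s₂ h
    cases t₂ with
    | leaf => simp [enc] at h
    | node l' r' =>
      simp only [enc, List.cons_append, List.cons.injEq, List.append_assoc] at h
      obtain ⟨-, h⟩ := h
      obtain ⟨rfl, h2⟩ := ihl _ _ _ h
      obtain ⟨rfl, rfl⟩ := ihr _ _ _ h2
      exact ⟨rfl, rfl⟩

lemma enc_injective : Function.Injective enc := by
  intro a b h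
  have := enc_cancel a b [] [] (by simpa using h)
  exact this.1

lemma length_enc : ∀ T : BT, (enc T).length = 2 * T.size + 1 := by
  intro T
  induction T with
  | leaf => simp [enc, BT.size]
  | node l r ihl ihr =>
    simp only [enc, List.length_cons, List.length_append, ihl, ihr, BT.size]
    ring

lemma finite_size (n : ℕ) : Finite {T : BT // T.size = n} := by
  have hfin : {l : List Bool | l.length = 2 * n + 1}.Finite := List.finite_length_eq _ _
  haveI := hfin.to_subtype
  apply Finite.of_injective
    (fun T : {T : BT // T.size = n} =>
      (⟨enc T.1, by simp [length_enc, T.2]⟩ : {l : List Bool | l.length = 2 * n + 1}))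
  intro a b h
  have hval : enc a.1 = enc b.1 := congrArg Subtype.val h
  exact Subtype.ext (enc_injective hval)

/-! ### Statistics and generating series -/

/-- The generating series of a statistic. -/
noncomputable def ser (s : BT → (Fin 2 →₀ ℕ)) : MvPowerSeries (Fin 2) ℚ :=
  fun d => (Nat.card {T : BT // s T = d} : ℚ)

/-- The finsupp on `Fin 2` with value `a` at `0` and `b` at `1`. -/
noncomputable def pairF (a b : ℕ) : Fin 2 →₀ ℕ :=
  Finsupp.single 0 a + Finsupp.single 1 b

@[simp] lemma pairF_apply_zero (a b : ℕ) : pairF a b 0 = a := by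
  simp [pairF, Finsupp.single_apply]

@[simp] lemma pairF_apply_one (a b : ℕ) : pairF a b 1 = b := by
  simp [pairF, Finsupp.single_apply]

lemma eq_pairF (d : Fin 2 →₀ ℕ) : d = pairF (d 0) (d 1) := by
  ext i
  fin_cases i <;> simp

lemma pairF_add (a b c d : ℕ) :
    pairF a b + pairF c d = pairF (a + c) (b + d) := by
  ext i
  fin_cases i <;> simp

lemma pairF_inj {a b c d : ℕ} : pairF a b = pairF c d ↔ a = c ∧ b = d := by
  constructor
  · intro h
    have h0 := congrArg (fun f : Fin 2 →₀ ℕ => f 0) h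
    have h1 := congrArg (fun f : Fin 2 →₀ ℕ => f 1) h
    simp only [pairF_apply_zero, pairF_apply_one] at h0 h1
    exact ⟨h0, h1⟩
  · rintro ⟨rfl, rfl⟩
    rfl

lemma finite_fiber (s : BT → (Fin 2 →₀ ℕ)) (hs : ∀ T, s T 0 = T.size)
    (d : Fin 2 →₀ ℕ) : Finite {T : BT // s T = d} := by
  haveI := finite_size (d 0)
  apply Finite.of_injective
    (fun T : {T : BT // s T = d} =>
      (⟨T.1, by rw [← hs T.1, T.2]⟩ : {T : BT // T.size = d 0}))
  intro a b h
  have hval := congrArg (Subtype.val : {T : BT // T.size = d 0} → BT) h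
  exact Subtype.ext hval

lemma nat_card_sigma {ι : Type*} [Fintype ι] (β : ι → Type*) [∀ i, Finite (β i)] :
    Nat.card ((i : ι) × β i) = ∑ i, Nat.card (β i) := by
  classical
  haveI := fun i => Fintype.ofFinite (β i)
  simp [Nat.card_eq_fintype_card, Fintype.card_sigma]

/-- Decomposing pairs of trees according to the pair of statistics. -/
noncomputable def pairsEquiv (s₁ s₂ : BT → (Fin 2 →₀ ℕ)) (m : Fin 2 →₀ ℕ) :
    {p : BT × BT // s₁ p.1 + s₂ p.2 = m} ≃
      Σ q : (Finset.HasAntidiagonal.antidiagonal m : Finset _),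
        ({T : BT // s₁ T = (q : (Fin 2 →₀ ℕ) × (Fin 2 →₀ ℕ)).1} ×
         {T : BT // s₂ T = (q : (Fin 2 →₀ ℕ) × (Fin 2 →₀ ℕ)).2}) where
  toFun p :=
    ⟨⟨(s₁ p.1.1, s₂ p.1.2), by simp [Finset.HasAntidiagonal.mem_antidiagonal, p.2]⟩,
      ⟨p.1.1, rfl⟩, ⟨p.1.2, rfl⟩⟩
  invFun x :=
    ⟨(x.2.1.1, x.2.2.1), by
      rw [x.2.1.2, x.2.2.2]
      exact Finset.HasAntidiagonal.mem_antidiagonal.1 x.1.2⟩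
  left_inv p := rfl
  right_inv x := by
    obtain ⟨⟨⟨q1, q2⟩, hq⟩, ⟨l, hl⟩, ⟨r, hr⟩⟩ := x
    have hl2 : s₁ l = q1 := hl
    have hr2 : s₂ r = q2 := hr
    subst hl2
    subst hr2
    rfl

lemma card_pairs (s₁ s₂ : BT → (Fin 2 →₀ ℕ))
    (h₁ : ∀ T, s₁ T 0 = T.size) (h₂ : ∀ T, s₂ T 0 = T.size) (m : Fin 2 →₀ ℕ) :
    (Nat.card {p : BT × BT // s₁ p.1 + s₂ p.2 = m} : ℚ) =
      ∑ q ∈ Finset.HasAntidiagonal.antidiagonal m,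
        (Nat.card {T : BT // s₁ T = q.1} : ℚ) * Nat.card {T : BT // s₂ T = q.2} := by
  haveI : ∀ d, Finite {T : BT // s₁ T = d} := finite_fiber s₁ h₁
  haveI : ∀ d, Finite {T : BT // s₂ T = d} := finite_fiber s₂ h₂
  rw [Nat.card_congr (pairsEquiv s₁ s₂ m), nat_card_sigma]
  push_cast
  rw [← Finset.sum_coe_sort (Finset.HasAntidiagonal.antidiagonal m)]
  congr 1
  ext q
  rw [Nat.card_prod]
  push_cast
  rfl

/-- The equivalence between pairs of trees with given statistics and non-leaf trees. -/
noncomputable def nodeEquiv (s s₁ s₂ : BT → (Fin 2 →₀ ℕ)) (c m d : Fin 2 →₀ ℕ)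
    (hnode : ∀ l r, s (.node l r) = c + (s₁ l + s₂ r)) (hcd : c + m = d) :
    {p : BT × BT // s₁ p.1 + s₂ p.2 = m} ≃ {T : BT // T ≠ BT.leaf ∧ s T = d} where
  toFun p :=
    ⟨.node p.1.1 p.1.2, by simp, by rw [hnode, p.2, hcd]⟩
  invFun T :=
    match T with
    | ⟨.leaf, h, _⟩ => absurd rfl h
    | ⟨.node l r, _, hs'⟩ =>
      ⟨(l, r), by
        rw [hnode] at hs'
        rw [← hcd] at hs'
        exact add_left_cancel hs'⟩
  left_inv p := rfl
  right_inv T := by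
    rcases T with ⟨T, hT, hs'⟩
    cases T with
    | leaf => exact absurd rfl hT
    | node l r => rfl

/-- Key counting lemma: recursive description of a statistic's generating series. -/
lemma ser_key (s s₁ s₂ : BT → (Fin 2 →₀ ℕ)) (c : Fin 2 →₀ ℕ)
    (hs : ∀ T, s T 0 = T.size) (h₁ : ∀ T, s₁ T 0 = T.size) (h₂ : ∀ T, s₂ T 0 = T.size)
    (h0 : s .leaf = 0)
    (hnode : ∀ l r, s (.node l r) = c + (s₁ l + s₂ r)) :
    ser s = 1 + MvPowerSeries.monomial c 1 * (ser s₁ * ser s₂) := by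
  classical
  haveI : ∀ d, Finite {T : BT // s T = d} := finite_fiber s hs
  ext d
  rw [map_add, MvPowerSeries.coeff_one, MvPowerSeries.coeff_monomial_mul]
  have hLHS : MvPowerSeries.coeff d (ser s) = (Nat.card {T : BT // s T = d} : ℚ) := rfl
  rw [hLHS]
  have claimA : (Nat.card {T : BT // s T = d} : ℚ) =
      (if d = 0 then (1 : ℚ) else 0) + Nat.card {T : BT // T ≠ BT.leaf ∧ s T = d} := by
    by_cases hd : d = 0
    · subst hd
      have huniq : ∀ T : BT, s T = 0 → T = BT.leaf := by
        intro T hT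
        cases T with
        | leaf => rfl
        | node l r =>
          exfalso
          have := hs (BT.node l r)
          rw [hT] at this
          simp [BT.size] at this
          omega
      haveI : Unique {T : BT // s T = 0} :=
        { default := ⟨BT.leaf, h0⟩
          uniq := fun T => Subtype.ext (huniq T.1 T.2) }
      haveI : IsEmpty {T : BT // T ≠ BT.leaf ∧ s T = 0} := by
        constructor
        rintro ⟨T, hT, hsT⟩
        exact hT (huniq T hsT)
      rw [Nat.card_unique, Nat.card_of_isEmpty]
      simp
    · have hequiv : {T : BT // s T = d} ≃ {T : BT // T ≠ BT.leaf ∧ s T = d} :=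
        Equiv.subtypeEquivRight (by
          intro T
          constructor
          · intro h
            refine ⟨?_, h⟩
            rintro rfl
            rw [h0] at h
            exact hd h.symm
          · exact fun h => h.2)
      rw [Nat.card_congr hequiv]
      simp [hd]
  have claimB : (Nat.card {T : BT // T ≠ BT.leaf ∧ s T = d} : ℚ) =
      if c ≤ d then (1 : ℚ) * MvPowerSeries.coeff (d - c) (ser s₁ * ser s₂) else 0 := by
    by_cases hcd : c ≤ d
    · rw [if_pos hcd, one_mul]
      have hm : c + (d - c) = d := add_tsub_cancel_of_le hcd
      rw [← Nat.card_congr (nodeEquiv s s₁ s₂ c (d - c) d hnode hm)]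
      rw [card_pairs s₁ s₂ h₁ h₂ (d - c), MvPowerSeries.coeff_mul]
      rfl
    · rw [if_neg hcd]
      haveI : IsEmpty {T : BT // T ≠ BT.leaf ∧ s T = d} := by
        constructor
        rintro ⟨T, hT, hsT⟩
        cases T with
        | leaf => exact hT rfl
        | node l r =>
          rw [hnode] at hsT
          exact hcd (hsT ▸ le_self_add)
      rw [Nat.card_of_isEmpty]
      simp
  rw [claimA, claimB]

/-! ### The three statistics -/

noncomputable def sB (T : BT) : Fin 2 →₀ ℕ := pairF T.size (hookCount T)
noncomputable def sL (T : BT) : Fin 2 →₀ ℕ := pairF T.size (hookAuxL T)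
noncomputable def sR (T : BT) : Fin 2 →₀ ℕ := pairF T.size (hookAuxR T)

lemma sB_zero (T : BT) : sB T 0 = T.size := by simp [sB]
lemma sL_zero (T : BT) : sL T 0 = T.size := by simp [sL]
lemma sR_zero (T : BT) : sR T 0 = T.size := by simp [sR]

lemma Bser_eq : Bser = ser sB := by
  funext d
  show (Nat.card {T : BT // T.size = d 0 ∧ hookCount T = d 1} : ℚ) = _
  congr 1
  apply Nat.card_congr
  apply Equiv.subtypeEquivRight
  intro T
  constructor
  · rintro ⟨h1, h2⟩
    rw [sB, h1, h2, ← eq_pairF]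
  · intro h
    refine ⟨?_, ?_⟩ <;> rw [← h] <;> simp [sB]

lemma pairF_one_zero : MvPowerSeries.monomial (pairF 1 0) (1 : ℚ) = MvPowerSeries.X 0 := by
  rw [MvPowerSeries.X_def]
  congr 1
  simp [pairF]

lemma pairF_one_one :
    MvPowerSeries.monomial (pairF 1 1) (1 : ℚ) =
      MvPowerSeries.X 0 * MvPowerSeries.X 1 := by
  rw [MvPowerSeries.X_def, MvPowerSeries.X_def, MvPowerSeries.monomial_mul_monomial]
  norm_num
  rfl

lemma eqL : ser sL = 1 + MvPowerSeries.X 0 * (ser sL * ser sB) := by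
  rw [← pairF_one_zero]
  apply ser_key sL sL sB (pairF 1 0) sL_zero sL_zero sB_zero
  · simp only [sL, hookAuxL]
    ext i
    fin_cases i <;> simp [BT.size]
  · intro l r
    simp only [sL, sB, BT.size, hookAuxL, pairF_add]
    rw [pairF_inj]
    omega

lemma eqR : ser sR = 1 + MvPowerSeries.X 0 * (ser sB * ser sR) := by
  rw [← pairF_one_zero]
  apply ser_key sR sB sR (pairF 1 0) sR_zero sB_zero sR_zero
  · simp only [sR, hookAuxR]
    ext i
    fin_cases i <;> simp [BT.size]
  · intro l r
    simp only [sR, sB, BT.size, hookAuxR, pairF_add]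
    rw [pairF_inj]
    omega

lemma eqB : ser sB = 1 + (MvPowerSeries.X 0 * MvPowerSeries.X 1) * (ser sL * ser sR) := by
  rw [← pairF_one_one]
  apply ser_key sB sL sR (pairF 1 1) sB_zero sL_zero sR_zero
  · simp only [sB, hookCount]
    ext i
    fin_cases i <;> simp [BT.size]
  · intro l r
    simp only [sB, sL, sR, BT.size, hookCount, pairF_add]
    rw [pairF_inj]
    omega

end BTAux

/-- The generating series of binary trees counted by vertices (`x`)
and hook number (`t`) satisfies `B = 1 + x t (1/(1 - x B))²`. -/
theorem stmt17 :
    Bser = 1 + MvPowerSeries.X 0 * MvPowerSeries.X 1 *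
      ((1 - MvPowerSeries.X 0 * Bser)⁻¹) ^ 2 := by
  classical
  open BTAux MvPowerSeries in
  rw [Bser_eq]
  have hL : ser sL * (1 - X 0 * ser sB) = 1 := by linear_combination eqL
  have hR : ser sR * (1 - X 0 * ser sB) = 1 := by linear_combination eqR
  have hconst : MvPowerSeries.constantCoeff (1 - X 0 * ser sB) ≠ 0 := by
    simp [map_sub, map_mul, MvPowerSeries.constantCoeff_X]
  have hinv : (1 - X 0 * ser sB)⁻¹ = ser sL :=
    (MvPowerSeries.inv_eq_iff_mul_eq_one hconst).2 hL
  have hLR : ser sL = ser sR := by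
    calc ser sL = ser sL * (ser sR * (1 - X 0 * ser sB)) := by rw [hR, mul_one]
    _ = ser sR * (ser sL * (1 - X 0 * ser sB)) := by ring
    _ = ser sR := by rw [hL, mul_one]
  rw [hinv, eqB, hLR]
  ring
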